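/- Let p be prime, u ≥ 0, n ≥ u, and Γ_n cyclic of order pⁿ with generator γ. The quotient ℤ_p[Γ_n]/(p^u(1−γ), N_n(γ)) (where N_n(γ) = 1 + γ + ⋯ + γ^{pⁿ−1}) has cardinality p^{n−u} · (p^u)^{pⁿ} = pⁿ · (p^u)^{pⁿ−1}. -/

import Mathlib

set_option synthInstance.maxHeartbeats 1000000
set_option maxHeartbeats 1000000

noncomputable abbrev padicGroupRing (p n : ℕ) [Fact p.Prime] : Type :=
  MonoidAlgebra ℤ_[p] (Multiplicative (ZMod (p ^ n)))

noncomputable def γgen (p n : ℕ) [Fact p.Prime] : padicGroupRing p n :=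
  MonoidAlgebra.of ℤ_[p] (Multiplicative (ZMod (p ^ n))) (Multiplicative.ofAdd 1)

namespace QCG
open Finset

variable (p u n : ℕ) [Fact p.Prime]

abbrev Rng := padicGroupRing p n

noncomputable def gam : Rng p n := γgen p n

noncomputable def Nrm : Rng p n := ∑ i ∈ range (p ^ n), gam p n ^ i

noncomputable def Idl : Ideal (Rng p n) :=
  Ideal.span {(p : Rng p n) ^ u * (1 - gam p n), Nrm p n}

lemma pn_pos : 0 < p ^ n := Nat.pow_pos (Fact.out : p.Prime).pos

instance : NeZero (p ^ n) := ⟨(pn_pos p n).ne'⟩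

/-- generic telescoping identity -/
lemma tele {B : Type*} [CommRing B] (x : B) (m : ℕ) :
    ∑ i ∈ range m, ((m : B) - (i : B)) * (x ^ i - x ^ (i + 1))
      = ((m : B) + 1) - ∑ j ∈ range (m + 1), x ^ j := by
  induction m with
  | zero => simp
  | succ m ih =>
    have h1 : ∀ i ∈ range (m + 1),
        (((m + 1 : ℕ) : B) - (i : B)) * (x ^ i - x ^ (i + 1))
          = ((m : B) - (i : B)) * (x ^ i - x ^ (i + 1)) + (x ^ i - x ^ (i + 1)) := by
      intro i _; push_cast; ring
    rw [Finset.sum_congr rfl h1, Finset.sum_add_distrib, Finset.sum_range_succ,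
      Finset.sum_range_sub' (fun i => x ^ i), ih, Finset.sum_range_succ (fun j => x ^ j) (m + 1)]
    push_cast
    ring

lemma gam_pow (k : ℕ) :
    gam p n ^ k = MonoidAlgebra.single (Multiplicative.ofAdd ((k : ZMod (p ^ n)))) 1 := by
  rw [gam, γgen, MonoidAlgebra.of_apply, MonoidAlgebra.single_pow, one_pow]
  congr 1
  rw [← ofAdd_nsmul]
  congr 1
  simp [nsmul_eq_mul]

lemma gam_pow_N : gam p n ^ (p ^ n) = 1 := by
  rw [gam_pow]
  simp [MonoidAlgebra.one_def]

lemma gam_pow_mod (k : ℕ) : gam p n ^ k = gam p n ^ (k % p ^ n) := by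
  conv_lhs => rw [← Nat.div_add_mod k (p ^ n)]
  rw [pow_add, pow_mul, gam_pow_N, one_pow, one_mul]

lemma single_one_eq (g : Multiplicative (ZMod (p ^ n))) :
    MonoidAlgebra.single g (1 : ℤ_[p]) = gam p n ^ (Multiplicative.toAdd g).val := by
  rw [gam_pow]
  congr 1
  simp [ZMod.natCast_val, ZMod.cast_id]

lemma gam_mul_Nrm : gam p n * Nrm p n = Nrm p n := by
  rw [Nrm, Finset.mul_sum]
  have : ∀ i ∈ range (p ^ n), gam p n * gam p n ^ i = gam p n ^ (i + 1) := by
    intro i _; rw [pow_succ, mul_comm]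
  rw [Finset.sum_congr rfl this]
  have h0 : 0 < p ^ n := pn_pos p n
  calc ∑ i ∈ range (p ^ n), gam p n ^ (i + 1)
      = ∑ i ∈ range (p ^ n + 1), gam p n ^ i - 1 := by
        rw [Finset.sum_range_succ' (fun i => gam p n ^ i)]; simp
    _ = ∑ i ∈ range (p ^ n), gam p n ^ i := by
        rw [Finset.sum_range_succ, gam_pow_N]; ring

lemma gam_pow_mul_Nrm (k : ℕ) : gam p n ^ k * Nrm p n = Nrm p n := by
  induction k with
  | zero => simp
  | succ k ih => rw [pow_succ, mul_comm (gam p n ^ k), mul_assoc, ih, gam_mul_Nrm]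

/-- the key exact identity -/
lemma keyid :
    ((p ^ n : ℕ) : Rng p n) - Nrm p n
      = (∑ i ∈ range (p ^ n - 1), (((p ^ n : ℕ) : Rng p n) - 1 - (i : Rng p n)) * gam p n ^ i)
          * (1 - gam p n) := by
  have h1 : (1 : ℕ) ≤ p ^ n := pn_pos p n
  have hc : (((p ^ n - 1 : ℕ)) : Rng p n) = ((p ^ n : ℕ) : Rng p n) - 1 := by
    push_cast [Nat.cast_sub h1]; ring
  have := tele (gam p n) (p ^ n - 1)
  rw [Nat.sub_add_cancel h1] at this
  rw [Finset.sum_mul]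
  have h2 : ∀ i ∈ range (p ^ n - 1),
      (((p ^ n : ℕ) : Rng p n) - 1 - (i : Rng p n)) * gam p n ^ i * (1 - gam p n)
        = (((p ^ n - 1 : ℕ) : Rng p n) - (i : Rng p n)) * (gam p n ^ i - gam p n ^ (i + 1)) := by
    intro i _; rw [hc]; ring
  rw [Finset.sum_congr rfl h2, this, hc, Nrm]
  ring


/-! ### the unit t -/

lemma isUnit_Nsub1 (hn : 1 ≤ n) : IsUnit (((p ^ n : ℕ) : ℤ_[p]) - 1) := by
  by_contra h
  have hmem : ((p ^ n : ℕ) : ℤ_[p]) - 1 ∈ IsLocalRing.maximalIdeal ℤ_[p] := by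
    rw [IsLocalRing.mem_maximalIdeal]; exact h
  rw [PadicInt.maximalIdeal_eq_span_p, Ideal.mem_span_singleton] at hmem
  have hN : (p : ℤ_[p]) ∣ ((p ^ n : ℕ) : ℤ_[p]) := by
    push_cast
    exact dvd_pow_self _ (by omega)
  have h1 : (p : ℤ_[p]) ∣ 1 := by
    have := dvd_sub hN hmem
    simpa using this
  have := PadicInt.norm_p (p := p)
  have hu1 : IsUnit (p : ℤ_[p]) := isUnit_of_dvd_one h1
  rw [PadicInt.isUnit_iff] at hu1
  rw [hu1] at this
  have hp2 : 2 ≤ p := (Fact.out : p.Prime).two_le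
  have : (1 : ℝ) = (p : ℝ)⁻¹ := this
  have hplt : (1 : ℝ) < p := by exact_mod_cast hp2.trans_lt' (by norm_num)
  nlinarith [inv_lt_one_of_one_lt₀ hplt]

noncomputable def tA : ℤ_[p] := Ring.inverse (((p ^ n : ℕ) : ℤ_[p]) - 1)

lemma tA_mul (hn : 1 ≤ n) : tA p n * (((p ^ n : ℕ) : ℤ_[p]) - 1) = 1 :=
  Ring.inverse_mul_cancel _ (isUnit_Nsub1 p n hn)

/-! ### ideal membership facts -/

lemma cast_pow_smul (x : Rng p n) (k : ℕ) : (p : Rng p n) ^ k * x = ((p : ℤ_[p]) ^ k) • x := by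
  rw [Algebra.smul_def, map_pow, map_natCast]

lemma E1 : (p : Rng p n) ^ (n + u) ∈ Idl p u n := by
  rw [Idl, Ideal.mem_span_pair]
  refine ⟨∑ i ∈ range (p ^ n - 1), (((p ^ n : ℕ) : Rng p n) - 1 - (i : Rng p n)) * gam p n ^ i,
    (p : Rng p n) ^ u, ?_⟩
  have : (∑ i ∈ range (p ^ n - 1), (((p ^ n : ℕ) : Rng p n) - 1 - (i : Rng p n)) * gam p n ^ i)
      * ((p : Rng p n) ^ u * (1 - gam p n)) + (p : Rng p n) ^ u * Nrm p n
      = (p : Rng p n) ^ u * ((((p ^ n : ℕ) : Rng p n) - Nrm p n) + Nrm p n) := by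
    rw [keyid]; ring
  rw [this]
  push_cast
  ring

lemma E2 (k : ℕ) : gam p n ^ k * ((p : Rng p n) ^ u * (1 - gam p n)) ∈ Idl p u n :=
  Ideal.mul_mem_left _ _ (Ideal.subset_span (by simp))

lemma Nrm_mem : Nrm p n ∈ Idl p u n := Ideal.subset_span (by simp)

/-! ### target module -/

abbrev T1 := ℤ_[p] ⧸ (Ideal.span {(p : ℤ_[p]) ^ (n + u)})
abbrev T2 := ℤ_[p] ⧸ (Ideal.span {(p : ℤ_[p]) ^ u})
abbrev TT := T1 p u n × (Fin (p ^ n - 2) → T2 p u)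

noncomputable def q1 : ℤ_[p] →ₗ[ℤ_[p]] T1 p u n :=
  Submodule.mkQ (Ideal.span {(p : ℤ_[p]) ^ (n + u)})
noncomputable def q2 : ℤ_[p] →ₗ[ℤ_[p]] T2 p u :=
  Submodule.mkQ (Ideal.span {(p : ℤ_[p]) ^ u})

lemma q1_eq_zero {x : ℤ_[p]} : q1 p u n x = 0 ↔ (p : ℤ_[p]) ^ (n + u) ∣ x := by
  rw [q1, Submodule.mkQ_apply, Submodule.Quotient.mk_eq_zero, Ideal.mem_span_singleton]

lemma q2_eq_zero {x : ℤ_[p]} : q2 p u x = 0 ↔ (p : ℤ_[p]) ^ u ∣ x := by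
  rw [q2, Submodule.mkQ_apply, Submodule.Quotient.mk_eq_zero, Ideal.mem_span_singleton]

lemma q1_surj : Function.Surjective (q1 p u n) := Submodule.mkQ_surjective _
lemma q2_surj : Function.Surjective (q2 p u) := Submodule.mkQ_surjective _

lemma q1_eq_of_dvd {x y : ℤ_[p]} (h : (p : ℤ_[p]) ^ (n + u) ∣ x - y) :
    q1 p u n x = q1 p u n y := by
  have : q1 p u n (x - y) = 0 := (q1_eq_zero p u n).2 h
  rw [map_sub] at this
  exact sub_eq_zero.1 this


lemma pu_smul_T2 (x : T2 p u) : (p : ℤ_[p]) ^ u • x = 0 := by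
  obtain ⟨z, rfl⟩ := q2_surj p u x
  rw [← map_smul, q2_eq_zero, smul_eq_mul]
  exact Dvd.intro _ rfl

/-! ### the map Ψ -/

noncomputable def mkPsi {M : Type*} [AddCommGroup M] [Module ℤ_[p] M]
    (v : Multiplicative (ZMod (p ^ n)) → M) :
    Rng p n →ₗ[ℤ_[p]] M where
  toFun f := f.coeff.sum fun g a => a • v g
  map_add' f g := Finsupp.sum_add_index' (fun a => zero_smul _ _) (fun a b₁ b₂ => add_smul _ _ _)
  map_smul' b f := by
    simp only [RingHom.id_apply]
    rw [MonoidAlgebra.coeff_smul, Finsupp.sum_smul_index (fun i => zero_smul ℤ_[p] (v i)), Finsupp.smul_sum]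
    exact Finsupp.sum_congr fun g _ => mul_smul _ _ _

lemma mkPsi_single {M : Type*} [AddCommGroup M] [Module ℤ_[p] M]
    (v : Multiplicative (ZMod (p ^ n)) → M) (g : Multiplicative (ZMod (p ^ n))) (a : ℤ_[p]) :
    mkPsi p n v (MonoidAlgebra.single g a) = a • v g :=
  Finsupp.sum_single_index (h := fun g a => a • v g) (zero_smul _ _)

noncomputable def vv (j : ℕ) : TT p u n :=
  if j = 0 then (q1 p u n 1, 0)
  else (q1 p u n (1 - tA p n * (p : ℤ_[p]) ^ n),
        fun i => q2 p u (tA p n * (((p ^ n : ℕ) : ℤ_[p]) - 2 - ((i : ℕ) : ℤ_[p]))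
          - if (i : ℕ) + 2 ≤ j then 1 else 0))

noncomputable def Psi : Rng p n →ₗ[ℤ_[p]] TT p u n :=
  mkPsi p n (fun g => vv p u n (Multiplicative.toAdd g).val)

lemma Psi_single (g : Multiplicative (ZMod (p ^ n))) (a : ℤ_[p]) :
    Psi p u n (MonoidAlgebra.single g a) = a • vv p u n (Multiplicative.toAdd g).val :=
  mkPsi_single p n _ g a

lemma Psi_gam_pow (k : ℕ) : Psi p u n (gam p n ^ k) = vv p u n (k % p ^ n) := by
  rw [gam_pow, Psi_single, one_smul]
  congr 1
  simp [ZMod.val_natCast]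

lemma Psi_gam_pow_lt {k : ℕ} (h : k < p ^ n) : Psi p u n (gam p n ^ k) = vv p u n k := by
  rw [Psi_gam_pow, Nat.mod_eq_of_lt h]

lemma pu_smul_fst (j : ℕ) :
    (p : ℤ_[p]) ^ u • (vv p u n j).1 = q1 p u n ((p : ℤ_[p]) ^ u) := by
  rw [vv]
  by_cases h : j = 0
  · rw [if_pos h, ← map_smul, smul_eq_mul, mul_one]
  · rw [if_neg h, ← map_smul, smul_eq_mul]
    apply q1_eq_of_dvd
    have : (p : ℤ_[p]) ^ u * (1 - tA p n * (p : ℤ_[p]) ^ n) - (p : ℤ_[p]) ^ u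
        = -(tA p n * ((p : ℤ_[p]) ^ (n + u))) := by
      rw [pow_add]; ring
    rw [this, dvd_neg]
    exact dvd_mul_left _ _

lemma P1 (g : Multiplicative (ZMod (p ^ n))) :
    Psi p u n (MonoidAlgebra.single g 1 * ((p : Rng p n) ^ u * (1 - gam p n))) = 0 := by
  set j := (Multiplicative.toAdd g).val with hj
  have h1 : MonoidAlgebra.single g (1 : ℤ_[p]) * ((p : Rng p n) ^ u * (1 - gam p n))
      = ((p : ℤ_[p]) ^ u) • (gam p n ^ j - gam p n ^ (j + 1)) := by
    rw [single_one_eq, ← hj, ← cast_pow_smul]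
    ring
  rw [h1, map_smul, map_sub, Psi_gam_pow_lt p u n (ZMod.val_lt _), Psi_gam_pow]
  ext
  · simp only [Prod.fst_sub, smul_sub, Prod.smul_fst, Prod.fst_zero]
    rw [pu_smul_fst, pu_smul_fst, sub_self]
  · simp only [Prod.snd_sub, smul_sub, Prod.smul_snd, Prod.snd_zero]
    rw [Pi.sub_apply, Pi.smul_apply, Pi.smul_apply, pu_smul_T2, pu_smul_T2, sub_self]
    rfl

lemma single_mul_Nrm (g : Multiplicative (ZMod (p ^ n))) :
    MonoidAlgebra.single g (1 : ℤ_[p]) * Nrm p n = Nrm p n := by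
  rw [single_one_eq, gam_pow_mul_Nrm]

lemma P2 (hn : 1 ≤ n) : Psi p u n (Nrm p n) = 0 := by
  have hN1 : (1:ℕ) ≤ p ^ n := pn_pos p n
  obtain ⟨m, hm⟩ : ∃ m, p ^ n = m + 1 := ⟨p ^ n - 1, by omega⟩
  have hm' : ((m : ℕ) : ℤ_[p]) = ((p ^ n : ℕ) : ℤ_[p]) - 1 := by
    rw [hm]; push_cast; ring
  have ht := tA_mul p n hn
  have hr : Finset.range (p ^ n) = Finset.range (m + 1) := by rw [hm]
  rw [Nrm, map_sum,
    Finset.sum_congr rfl (fun k hk => Psi_gam_pow_lt p u n (Finset.mem_range.1 hk)),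
    hr, Finset.sum_range_succ']
  have hvv : ∀ i : ℕ, vv p u n (i + 1)
      = (q1 p u n (1 - tA p n * (p : ℤ_[p]) ^ n),
         fun i' : Fin (p ^ n - 2) => q2 p u (tA p n * (((p ^ n : ℕ) : ℤ_[p]) - 2 - ((i' : ℕ) : ℤ_[p]))
           - if (i' : ℕ) + 2 ≤ i + 1 then 1 else 0)) := fun i => by
    rw [vv, if_neg (Nat.succ_ne_zero i)]
  have hvv0 : vv p u n 0 = (q1 p u n 1, 0) := by rw [vv, if_pos rfl]
  ext
  · rw [Prod.fst_add, Prod.fst_sum, hvv0,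
      Finset.sum_congr rfl (fun i _ => by rw [hvv i])]
    simp only
    rw [Finset.sum_const, Finset.card_range, ← map_nsmul, ← map_add, nsmul_eq_mul]
    simp only [Prod.fst_zero]
    rw [q1_eq_zero]
    have harg : (m : ℤ_[p]) * (1 - tA p n * (p : ℤ_[p]) ^ n) + 1 = 0 := by
      have hNc : ((p ^ n : ℕ) : ℤ_[p]) = (p : ℤ_[p]) ^ n := by push_cast; ring
      have ht' : tA p n * ((p : ℤ_[p]) ^ n - 1) = 1 := by rw [← hNc]; exact ht
      rw [hm', hNc]
      linear_combination (-(p : ℤ_[p]) ^ n) * ht'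
    rw [harg]
    exact dvd_zero _
  · rename_i i'
    rw [Prod.snd_add, Prod.snd_sum, hvv0,
      Finset.sum_congr rfl (fun i _ => by rw [hvv i])]
    simp only [Finset.sum_apply, Pi.add_apply, Pi.zero_apply, add_zero]
    simp only [Prod.snd_zero, Pi.zero_apply]
    rw [← map_sum, Finset.sum_sub_distrib, Finset.sum_const, Finset.card_range, q2_eq_zero]
    have hcount : ∑ i ∈ Finset.range m, (if (i' : ℕ) + 2 ≤ i + 1 then (1:ℤ_[p]) else 0)
        = ((m - ((i' : ℕ) + 1) : ℕ) : ℤ_[p]) := by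
      rw [Finset.sum_congr rfl (fun i _ => if_congr (by omega : ((i' : ℕ) + 2 ≤ i + 1) ↔ ((i' : ℕ) + 1 ≤ i)) rfl rfl),
        Finset.sum_boole]
      congr 1
      have : (Finset.range m).filter (fun i => (i' : ℕ) + 1 ≤ i) = Finset.Ico ((i' : ℕ) + 1) m := by
        ext a; simp [Finset.mem_filter, Finset.mem_range, Finset.mem_Ico]; omega
      rw [this, Nat.card_Ico]
    rw [hcount]
    have hi' : (i' : ℕ) < p ^ n - 2 := i'.isLt
    have hcast : ((m - ((i' : ℕ) + 1) : ℕ) : ℤ_[p])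
        = ((p ^ n : ℕ) : ℤ_[p]) - 2 - ((i' : ℕ) : ℤ_[p]) := by
      have h2 : (i' : ℕ) + 1 ≤ m := by omega
      rw [Nat.cast_sub h2, hm']
      push_cast
      ring
    rw [hcast, nsmul_eq_mul, hm']
    have : (((p ^ n : ℕ) : ℤ_[p]) - 1) * (tA p n * (((p ^ n : ℕ) : ℤ_[p]) - 2 - ((i' : ℕ) : ℤ_[p])))
        - (((p ^ n : ℕ) : ℤ_[p]) - 2 - ((i' : ℕ) : ℤ_[p])) = 0 := by
      linear_combination (((p ^ n : ℕ) : ℤ_[p]) - 2 - ((i' : ℕ) : ℤ_[p])) * ht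
    rw [this]
    exact dvd_zero _

lemma Psi_mul_gen1 (r : Rng p n) :
    Psi p u n (r * ((p : Rng p n) ^ u * (1 - gam p n))) = 0 := by
  induction r using MonoidAlgebra.induction_on with
  | of g =>
    rw [MonoidAlgebra.of_apply]
    exact P1 p u n g
  | add f g hf hg => rw [add_mul, map_add, hf, hg, add_zero]
  | smul r f hf => rw [smul_mul_assoc, map_smul, hf, smul_zero]

lemma Psi_mul_gen2 (hn : 1 ≤ n) (r : Rng p n) : Psi p u n (r * Nrm p n) = 0 := by
  induction r using MonoidAlgebra.induction_on with
  | of g =>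
    rw [MonoidAlgebra.of_apply, single_mul_Nrm]
    exact P2 p u n hn
  | add f g hf hg => rw [add_mul, map_add, hf, hg, add_zero]
  | smul r f hf => rw [smul_mul_assoc, map_smul, hf, smul_zero]

lemma Psi_Idl (hn : 1 ≤ n) {x : Rng p n} (hx : x ∈ Idl p u n) : Psi p u n x = 0 := by
  rw [Idl, Ideal.mem_span_pair] at hx
  obtain ⟨a, b, rfl⟩ := hx
  rw [map_add, Psi_mul_gen1, Psi_mul_gen2 p u n hn, add_zero]

/-! ### the map φ and evaluation -/

abbrev FF := ℤ_[p] × (Fin (p ^ n - 2) → ℤ_[p])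

noncomputable def phi : FF p n →ₗ[ℤ_[p]] Rng p n where
  toFun z := z.1 • 1 + ∑ i, z.2 i • (gam p n ^ ((i : ℕ) + 1) * (1 - gam p n))
  map_add' a b := by
    simp only [Prod.fst_add, Prod.snd_add, Pi.add_apply, add_smul, Finset.sum_add_distrib]
    abel
  map_smul' c a := by
    simp only [Prod.smul_fst, Prod.smul_snd, Pi.smul_apply, smul_eq_mul, mul_smul,
      RingHom.id_apply, smul_add, Finset.smul_sum]

lemma phi_apply (z : FF p n) :
    phi p n z = z.1 • 1 + ∑ i, z.2 i • (gam p n ^ ((i : ℕ) + 1) * (1 - gam p n)) := rfl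

lemma Psi_one : Psi p u n 1 = (q1 p u n 1, 0) := by
  rw [MonoidAlgebra.one_def, Psi_single, one_smul]
  have h0 : (Multiplicative.toAdd (1 : Multiplicative (ZMod (p ^ n)))).val = 0 := by
    simp
  rw [h0, vv, if_pos rfl]

lemma Psi_gg (i : Fin (p ^ n - 2)) :
    Psi p u n (gam p n ^ ((i : ℕ) + 1) * (1 - gam p n)) = (0, Pi.single i (q2 p u 1)) := by
  have hi := i.isLt
  have h1 : gam p n ^ ((i : ℕ) + 1) * (1 - gam p n)
      = gam p n ^ ((i : ℕ) + 1) - gam p n ^ ((i : ℕ) + 2) := by ring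
  have hlt1 : (i : ℕ) + 1 < p ^ n := by omega
  have hlt2 : (i : ℕ) + 2 < p ^ n := by omega
  rw [h1, map_sub, Psi_gam_pow_lt p u n hlt1, Psi_gam_pow_lt p u n hlt2, vv, vv,
    if_neg (Nat.succ_ne_zero _), if_neg (Nat.succ_ne_zero _)]
  ext
  · simp only [Prod.fst_sub, sub_self]
  · rename_i i'
    simp only [Prod.snd_sub, Pi.sub_apply]
    rw [← map_sub, Pi.single_apply]
    by_cases h : i' = i
    · subst h
      rw [if_pos rfl, if_neg (by omega), if_pos (by omega)]
      norm_num
    · rw [if_neg h]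
      have hne : (i' : ℕ) ≠ (i : ℕ) := fun hc => h (Fin.ext hc)
      rcases Nat.lt_or_ge (i' : ℕ) (i : ℕ) with hlt | hge
      · rw [if_pos (by omega), if_pos (by omega)]
        norm_num
      · rw [if_neg (by omega), if_neg (by omega)]
        norm_num

lemma Psi_phi (z : FF p n) :
    Psi p u n (phi p n z) = (q1 p u n z.1, fun i => q2 p u (z.2 i)) := by
  rw [phi_apply, map_add, map_smul, Psi_one, map_sum]
  have hterm : ∀ i : Fin (p ^ n - 2),
      Psi p u n (z.2 i • (gam p n ^ ((i : ℕ) + 1) * (1 - gam p n)))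
        = (0, Pi.single i (q2 p u (z.2 i))) := by
    intro i
    rw [map_smul, Psi_gg]
    ext
    · simp
    · rename_i i'
      simp only [Prod.smul_snd, Pi.smul_apply]
      rw [Pi.single_apply, Pi.single_apply]
      by_cases h : i' = i
      · rw [if_pos h, if_pos h, ← map_smul, smul_eq_mul, mul_one]
      · rw [if_neg h, if_neg h, smul_zero]
  rw [Finset.sum_congr rfl (fun i _ => hterm i)]
  ext
  · simp only [Prod.fst_add, Prod.smul_fst, Prod.fst_sum]
    rw [← map_smul, smul_eq_mul, mul_one]
    simp
  · rename_i i'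
    simp only [Prod.snd_add, Prod.smul_snd, Prod.snd_sum, Pi.add_apply,
      Pi.smul_apply, Pi.zero_apply, smul_zero, Finset.sum_apply]
    rw [Finset.sum_pi_single]
    simp

/-! ### the quotient maps -/

noncomputable def Isub : Submodule ℤ_[p] (Rng p n) :=
  Submodule.restrictScalars ℤ_[p] (Idl p u n)

noncomputable def piMap : FF p n →ₗ[ℤ_[p]] (Rng p n ⧸ Isub p u n) :=
  (Isub p u n).mkQ ∘ₗ phi p n

noncomputable def Theta : FF p n →ₗ[ℤ_[p]] TT p u n :=
  LinearMap.prodMap (q1 p u n) (LinearMap.pi (fun i => (q2 p u) ∘ₗ (LinearMap.proj i)))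

lemma Theta_apply (z : FF p n) :
    Theta p u n z = (q1 p u n z.1, fun i => q2 p u (z.2 i)) := rfl

lemma Theta_surj : Function.Surjective (Theta p u n) := by
  rintro ⟨a, b⟩
  obtain ⟨x, hx⟩ := q1_surj p u n a
  refine ⟨(x, fun i => Classical.choose (q2_surj p u (b i))), ?_⟩
  rw [Theta_apply]
  refine Prod.ext hx (funext fun i => ?_)
  exact Classical.choose_spec (q2_surj p u (b i))

lemma mkQ_smul (a : ℤ_[p]) (x : Rng p n) :
    (Isub p u n).mkQ ((algebraMap ℤ_[p] (Rng p n) a) * x) = a • (Isub p u n).mkQ x := by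
  rw [← Algebra.smul_def, map_smul]

lemma mem_Isub {x : Rng p n} : x ∈ Isub p u n ↔ x ∈ Idl p u n := Iff.rfl

/-- `1 ∈ range π` -/
lemma mem1 : (Isub p u n).mkQ 1 ∈ LinearMap.range (piMap p u n) := by
  refine ⟨(1, 0), ?_⟩
  rw [piMap, LinearMap.comp_apply, phi_apply]
  simp

/-- `g_{i+1} ∈ range π` -/
lemma memgg (i : Fin (p ^ n - 2)) :
    (Isub p u n).mkQ (gam p n ^ ((i : ℕ) + 1) * (1 - gam p n))
      ∈ LinearMap.range (piMap p u n) := by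
  refine ⟨(0, Pi.single i 1), ?_⟩
  rw [piMap, LinearMap.comp_apply]
  have hz : phi p n ((0 : ℤ_[p]), Pi.single i (1 : ℤ_[p]))
      = gam p n ^ ((i : ℕ) + 1) * (1 - gam p n) := by
    rw [phi_apply]
    simp [Pi.single_apply, ite_smul, Finset.sum_ite_eq']
  rw [hz]

lemma mkQ_Nrm : (Isub p u n).mkQ (Nrm p n) = 0 := by
  rw [Submodule.mkQ_apply, Submodule.Quotient.mk_eq_zero]
  exact Nrm_mem p u n

lemma gg_small_mem (hn : 1 ≤ n) :
    ∀ k ≤ p ^ n - 2, (Isub p u n).mkQ (gam p n ^ k * (1 - gam p n))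
      ∈ LinearMap.range (piMap p u n) := by
  have hN1 : (1:ℕ) ≤ p ^ n := pn_pos p n
  have hp2 : 2 ≤ p := (Fact.out : p.Prime).two_le
  have hN2 : 2 ≤ p ^ n := by
    calc 2 ≤ p := hp2
    _ = p ^ 1 := (pow_one p).symm
    _ ≤ p ^ n := Nat.pow_le_pow_right (by omega) hn
  intro k hk
  rcases Nat.eq_zero_or_pos k with hk0 | hkpos
  · -- the hard case : k = 0
    subst hk0
    rw [pow_zero, one_mul]
    -- rearrange keyid
    have hsplit := keyid p n
    have hr : p ^ n - 1 = (p ^ n - 2) + 1 := by omega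
    rw [hr, Finset.sum_range_succ'] at hsplit
    -- hsplit : N - Nrm = (∑ i<N-2, c_{i+1} γ^{i+1} + c_0) * (1 - γ)
    have key2 : (((p ^ n : ℕ) : Rng p n) - 1) * (1 - gam p n)
        = ((p ^ n : ℕ) : Rng p n) - Nrm p n
          - ∑ i ∈ range (p ^ n - 2),
              (((p ^ n : ℕ) : Rng p n) - 2 - (i : Rng p n))
                * (gam p n ^ (i + 1) * (1 - gam p n)) := by
      have hd : (∑ i ∈ range (p ^ n - 2),
          (((p ^ n : ℕ) : Rng p n) - 1 - ((i + 1 : ℕ) : Rng p n)) * gam p n ^ (i + 1)) * (1 - gam p n)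
          = ∑ i ∈ range (p ^ n - 2),
              (((p ^ n : ℕ) : Rng p n) - 2 - (i : Rng p n)) * (gam p n ^ (i + 1) * (1 - gam p n)) := by
        rw [Finset.sum_mul]
        refine Finset.sum_congr rfl fun i _ => ?_
        push_cast
        ring
      rw [add_mul, hd] at hsplit
      rw [hsplit]
      push_cast
      ring
    -- now express mkQ (1 - gam)
    have hunit := tA_mul p n hn
    have e0 : (Isub p u n).mkQ (1 - gam p n)
        = tA p n • ((((p ^ n : ℕ) : ℤ_[p]) - 1) • (Isub p u n).mkQ (1 - gam p n)) := by
      rw [smul_smul, hunit, one_smul]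
    rw [e0]
    apply Submodule.smul_mem
    have e1 : (((p ^ n : ℕ) : ℤ_[p]) - 1) • (Isub p u n).mkQ (1 - gam p n)
        = (Isub p u n).mkQ ((((p ^ n : ℕ) : Rng p n) - 1) * (1 - gam p n)) := by
      rw [← mkQ_smul]
      congr 1
      rw [map_sub, map_one, map_natCast]
    rw [e1, key2, map_sub, map_sub, mkQ_Nrm, sub_zero, map_sum]
    apply Submodule.sub_mem
    · have : ((p ^ n : ℕ) : Rng p n) = algebraMap ℤ_[p] (Rng p n) ((p ^ n : ℕ) : ℤ_[p]) * 1 := by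
        rw [map_natCast, mul_one]
      rw [this, mkQ_smul]
      exact Submodule.smul_mem _ _ (mem1 p u n)
    · apply Submodule.sum_mem
      intro i hi
      have : (((p ^ n : ℕ) : Rng p n) - 2 - (i : Rng p n))
          = algebraMap ℤ_[p] (Rng p n) (((p ^ n : ℕ) : ℤ_[p]) - 2 - (i : ℤ_[p])) := by
        simp only [map_sub, map_natCast, map_ofNat]
      rw [this, mkQ_smul]
      apply Submodule.smul_mem
      have hilt : i < p ^ n - 2 := Finset.mem_range.1 hi
      have := memgg p u n ⟨i, hilt⟩
      simpa using this
  · -- 1 ≤ k ≤ N - 2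
    have hilt : k - 1 < p ^ n - 2 := by omega
    have := memgg p u n ⟨k - 1, hilt⟩
    have hk1 : k - 1 + 1 = k := by omega
    simpa [hk1] using this

lemma gg_mem (hn : 1 ≤ n) :
    ∀ k < p ^ n, (Isub p u n).mkQ (gam p n ^ k * (1 - gam p n))
      ∈ LinearMap.range (piMap p u n) := by
  have hN1 : (1:ℕ) ≤ p ^ n := pn_pos p n
  intro k hk
  rcases Nat.lt_or_ge k (p ^ n - 1) with hks | hke
  · exact gg_small_mem p u n hn k (by omega)
  · -- k = N - 1
    have hkeq : k = p ^ n - 1 := by omega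
    subst hkeq
    have htel : ∑ j ∈ range (p ^ n), (gam p n ^ j - gam p n ^ (j + 1)) = 0 := by
      rw [Finset.sum_range_sub' (fun j => gam p n ^ j), gam_pow_N, pow_zero, sub_self]
    have hr : range (p ^ n) = range ((p ^ n - 1) + 1) := by congr 1; omega
    rw [hr, Finset.sum_range_succ] at htel
    have h2 : ∀ j : ℕ, gam p n ^ j * (1 - gam p n) = gam p n ^ j - gam p n ^ (j + 1) := by
      intro j; ring
    have heq : gam p n ^ (p ^ n - 1) * (1 - gam p n)
        = - ∑ j ∈ range (p ^ n - 1), (gam p n ^ j * (1 - gam p n)) := by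
      rw [h2, Finset.sum_congr rfl (fun j _ => h2 j)]
      exact eq_neg_of_add_eq_zero_right htel
    rw [heq, map_neg, map_sum]
    apply Submodule.neg_mem
    apply Submodule.sum_mem
    intro j hj
    exact gg_small_mem p u n hn j (by have := Finset.mem_range.1 hj; omega)

lemma gam_mem (hn : 1 ≤ n) :
    ∀ k : ℕ, (Isub p u n).mkQ (gam p n ^ k) ∈ LinearMap.range (piMap p u n) := by
  intro k
  induction k with
  | zero => rw [pow_zero]; exact mem1 p u n
  | succ k ih =>
    have hsplit : gam p n ^ (k + 1) = gam p n ^ k - gam p n ^ k * (1 - gam p n) := by ring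
    rw [hsplit, map_sub]
    apply Submodule.sub_mem _ ih
    have hmod : gam p n ^ k * (1 - gam p n) = gam p n ^ (k % p ^ n) * (1 - gam p n) := by
      rw [← gam_pow_mod]
    rw [hmod]
    exact gg_mem p u n hn (k % p ^ n) (Nat.mod_lt _ (pn_pos p n))

lemma piMap_surj (hn : 1 ≤ n) : Function.Surjective (piMap p u n) := by
  intro q
  obtain ⟨f, rfl⟩ := Submodule.mkQ_surjective (Isub p u n) q
  show (Isub p u n).mkQ f ∈ LinearMap.range (piMap p u n)
  induction f using MonoidAlgebra.induction_on with
  | of g =>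
    rw [MonoidAlgebra.of_apply, single_one_eq]
    exact gam_mem p u n hn _
  | add f g hf hg => rw [map_add]; exact Submodule.add_mem _ hf hg
  | smul r f hf => rw [map_smul]; exact Submodule.smul_mem _ _ hf

lemma ker_eq (hn : 1 ≤ n) : LinearMap.ker (piMap p u n) = LinearMap.ker (Theta p u n) := by
  ext z
  simp only [LinearMap.mem_ker]
  constructor
  · intro hz
    have hmem : phi p n z ∈ Idl p u n := by
      rw [piMap, LinearMap.comp_apply, Submodule.mkQ_apply, Submodule.Quotient.mk_eq_zero] at hz
      exact hz
    have := Psi_Idl p u n hn hmem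
    rw [Psi_phi] at this
    rw [Theta_apply, this]
  · intro hz
    rw [Theta_apply, Prod.ext_iff] at hz
    obtain ⟨h1, h2⟩ := hz
    rw [show (0 : TT p u n).1 = 0 from rfl] at h1
    rw [show (0 : TT p u n).2 = 0 from rfl] at h2
    rw [q1_eq_zero] at h1
    obtain ⟨w, hw⟩ := h1
    have h2' : ∀ i, ∃ w, z.2 i = (p : ℤ_[p]) ^ u * w := by
      intro i
      have := congrFun h2 i
      rw [Pi.zero_apply, q2_eq_zero] at this
      exact this
    rw [piMap, LinearMap.comp_apply, Submodule.mkQ_apply, Submodule.Quotient.mk_eq_zero]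
    show phi p n z ∈ Idl p u n
    rw [phi_apply]
    apply Ideal.add_mem
    · -- z.1 • 1 ∈ Idl
      rw [Algebra.smul_def, mul_one, hw, map_mul, mul_comm]
      apply Ideal.mul_mem_left
      rw [map_pow, map_natCast]
      exact E1 p u n
    · apply Ideal.sum_mem
      intro i _
      obtain ⟨w', hw'⟩ := h2' i
      rw [hw', Algebra.smul_def, map_mul,
        mul_comm (algebraMap ℤ_[p] (Rng p n) ((p : ℤ_[p]) ^ u)) (algebraMap ℤ_[p] (Rng p n) w'),
        mul_assoc]
      apply Ideal.mul_mem_left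
      rw [map_pow, map_natCast]
      rw [show (p : Rng p n) ^ u * (gam p n ^ ((i : ℕ) + 1) * (1 - gam p n))
        = gam p n ^ ((i : ℕ) + 1) * ((p : Rng p n) ^ u * (1 - gam p n)) from by ring]
      exact E2 p u n _

/-! ### cardinalities -/

lemma cardT1 : Nat.card (T1 p u n) = p ^ (n + u) := by
  have hker : RingHom.ker (PadicInt.toZModPow (p := p) (n + u))
      = Ideal.span {(p : ℤ_[p]) ^ (n + u)} := PadicInt.ker_toZModPow (n + u)
  have hsurj : Function.Surjective (PadicInt.toZModPow (p := p) (n + u)) := by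
    intro x
    refine ⟨((x.val : ℕ) : ℤ_[p]), ?_⟩
    rw [map_natCast, ZMod.natCast_val, ZMod.cast_id]
  calc Nat.card (T1 p u n)
      = Nat.card (ZMod (p ^ (n + u))) := Nat.card_congr
        (((Ideal.quotEquivOfEq hker.symm).toEquiv).trans
          (RingHom.quotientKerEquivOfSurjective hsurj).toEquiv)
    _ = p ^ (n + u) := Nat.card_zmod _

lemma cardT2 : Nat.card (T2 p u) = p ^ u := by
  have hker : RingHom.ker (PadicInt.toZModPow (p := p) u)
      = Ideal.span {(p : ℤ_[p]) ^ u} := PadicInt.ker_toZModPow u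
  have hsurj : Function.Surjective (PadicInt.toZModPow (p := p) u) := by
    intro x
    refine ⟨((x.val : ℕ) : ℤ_[p]), ?_⟩
    rw [map_natCast, ZMod.natCast_val, ZMod.cast_id]
  calc Nat.card (T2 p u)
      = Nat.card (ZMod (p ^ u)) := Nat.card_congr
        (((Ideal.quotEquivOfEq hker.symm).toEquiv).trans
          (RingHom.quotientKerEquivOfSurjective hsurj).toEquiv)
    _ = p ^ u := Nat.card_zmod _

lemma card_main (hn : 1 ≤ n) :
    Nat.card (Rng p n ⧸ Idl p u n) = p ^ (n + u) * (p ^ u) ^ (p ^ n - 2) := by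
  have e1 : (Rng p n ⧸ Isub p u n) ≃ₗ[ℤ_[p]] (Rng p n ⧸ Idl p u n) :=
    Submodule.Quotient.restrictScalarsEquiv ℤ_[p] (Idl p u n)
  have e2 := LinearMap.quotKerEquivOfSurjective (piMap p u n) (piMap_surj p u n hn)
  have e3 := Submodule.quotEquivOfEq _ _ (ker_eq p u n hn)
  have e4 := LinearMap.quotKerEquivOfSurjective (Theta p u n) (Theta_surj p u n)
  have hcard : Nat.card (Rng p n ⧸ Idl p u n) = Nat.card (TT p u n) :=
    Nat.card_congr
      (e1.symm.toEquiv.trans (e2.symm.toEquiv.trans (e3.toEquiv.trans e4.toEquiv)))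
  rw [hcard, Nat.card_prod, cardT1, Nat.card_pi]
  rw [Finset.prod_const, Finset.card_univ, Fintype.card_fin, cardT2]

end QCG

theorem quotient_card_general_case (p u n : ℕ) [Fact p.Prime] (hun : u ≤ n) :
    Nat.card (padicGroupRing p n ⧸ Ideal.span
        {(p : padicGroupRing p n) ^ u * (1 - γgen p n),
         ∑ i ∈ Finset.range (p ^ n), γgen p n ^ i}) =
      p ^ (n - u) * (p ^ u) ^ (p ^ n) ∧
    p ^ (n - u) * (p ^ u) ^ (p ^ n) = p ^ n * (p ^ u) ^ (p ^ n - 1) := by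
  have hp2 : 2 ≤ p := (Fact.out : p.Prime).two_le
  constructor
  · by_cases hn0 : n = 0
    · subst hn0
      have hu0 : u = 0 := Nat.le_zero.mp hun
      subst hu0
      have hNrm1 : (∑ i ∈ Finset.range (p ^ 0), γgen p 0 ^ i) = 1 := by
        norm_num
      have htop : Ideal.span
          {(p : padicGroupRing p 0) ^ 0 * (1 - γgen p 0),
           ∑ i ∈ Finset.range (p ^ 0), γgen p 0 ^ i} = ⊤ := by
        rw [Ideal.eq_top_iff_one]
        apply Ideal.subset_span
        rw [hNrm1]
        simp
      rw [htop]
      have hsing : Subsingleton (padicGroupRing p 0 ⧸ (⊤ : Ideal (padicGroupRing p 0))) := by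
        constructor
        intro a b
        obtain ⟨x, rfl⟩ := Ideal.Quotient.mk_surjective a
        obtain ⟨y, rfl⟩ := Ideal.Quotient.mk_surjective b
        rw [Ideal.Quotient.eq]
        trivial
      rw [Nat.card_of_subsingleton (0 : padicGroupRing p 0 ⧸ (⊤ : Ideal (padicGroupRing p 0)))]
      norm_num
    · have hn : 1 ≤ n := by omega
      have hId : Ideal.span
          {(p : padicGroupRing p n) ^ u * (1 - γgen p n),
           ∑ i ∈ Finset.range (p ^ n), γgen p n ^ i} = QCG.Idl p u n := rfl
      rw [hId, QCG.card_main p u n hn]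
      have hN2 : 2 ≤ p ^ n := by
        calc 2 ≤ p := hp2
        _ = p ^ 1 := (pow_one p).symm
        _ ≤ p ^ n := Nat.pow_le_pow_right (by omega) hn
      rw [← pow_mul, ← pow_mul, ← pow_add, ← pow_add]
      congr 1
      have h3 : u * (p ^ n - 2) + u * 2 = u * p ^ n := by
        rw [← Nat.mul_add]
        congr 1
        omega
      generalize hA : u * (p ^ n - 2) = a at h3 ⊢
      generalize hB : u * p ^ n = b at h3 ⊢
      omega
  · have hN1 : 1 ≤ p ^ n := Nat.pow_pos (by omega)
    rw [← pow_mul, ← pow_mul, ← pow_add, ← pow_add]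
    congr 1
    have h3 : u * (p ^ n - 1) + u * 1 = u * p ^ n := by
      rw [← Nat.mul_add]
      congr 1
      omega
    generalize hA : u * (p ^ n - 1) = a at h3 ⊢
    generalize hB : u * p ^ n = b at h3 ⊢
    omega
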